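/- Let σ : ℝ → ℝ be continuous and non-polynomial, and let two multisets {{(x_k^{(1)}, x_k^{(2)})}}_{k=1}^n and {{(x̄_k^{(1)}, x̄_k^{(2)})}}_{k=1}^n of points in ℝ^{d₁} × ℝ^{d₂} be distinct. Then there exist vectors a^{(1)} ∈ ℝ^{d₁}, a^{(2)} ∈ ℝ^{d₂} and scalars b^{(1)}, b^{(2)} ∈ ℝ such that ∑_k σ(a^{(1)}·x_k^{(1)} + b^{(1)})·σ(a^{(2)}·x_k^{(2)} + b^{(2)}) ≠ ∑_k σ(a^{(1)}·x̄_k^{(1)} + b^{(1)})·σ(a^{(2)}·x̄_k^{(2)} + b^{(2)}). -/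

import Mathlib

open MeasureTheory Filter Topology Polynomial ContinuousLinearMap
open scoped Convolution



lemma iteratedDeriv_zero_fun {k : ℕ} : iteratedDeriv k (fun _ : ℝ => (0:ℝ)) = fun _ => 0 := by
  induction k with
  | zero => simp [iteratedDeriv_zero]
  | succ k ih => rw [iteratedDeriv_succ, ih]; funext x; simp

lemma iteratedDeriv_add' {k : ℕ} {f g : ℝ → ℝ} (hf : ContDiff ℝ (⊤:ℕ∞) f) (hg : ContDiff ℝ (⊤:ℕ∞) g)
    (x : ℝ) :
    iteratedDeriv k (fun y => f y + g y) x = iteratedDeriv k f x + iteratedDeriv k g x := by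
  have hfk : ContDiffOn ℝ k f Set.univ := (hf.of_le (by exact_mod_cast le_top)).contDiffOn
  have hgk : ContDiffOn ℝ k g Set.univ := (hg.of_le (by exact_mod_cast le_top)).contDiffOn
  have := iteratedDerivWithin_add (Set.mem_univ x) uniqueDiffOn_univ (hfk x (Set.mem_univ x)) (hgk x (Set.mem_univ x))
  simp only [iteratedDerivWithin_univ] at this
  exact this

lemma iteratedDeriv_cmul {k : ℕ} {f : ℝ → ℝ} (hf : ContDiff ℝ (⊤:ℕ∞) f) (c : ℝ) (x : ℝ) :
    iteratedDeriv k (fun y => c * f y) x = c * iteratedDeriv k f x := by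
  have hfk : ContDiffOn ℝ k f Set.univ := (hf.of_le (by exact_mod_cast le_top)).contDiffOn
  have := iteratedDerivWithin_const_mul (Set.mem_univ x) uniqueDiffOn_univ c (hfk x (Set.mem_univ x))
  simpa [iteratedDerivWithin_univ] using this

lemma iteratedDeriv_finset_sum {ι : Type*} (s : Finset ι) {f : ι → ℝ → ℝ}
    (hf : ∀ i ∈ s, ContDiff ℝ (⊤:ℕ∞) (f i)) (k : ℕ) (x : ℝ) :
    iteratedDeriv k (fun y => ∑ i ∈ s, f i y) x = ∑ i ∈ s, iteratedDeriv k (f i) x := by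
  induction s using Finset.cons_induction with
  | empty => simp [iteratedDeriv_zero_fun]
  | cons a s ha ih =>
    have h1 : ContDiff ℝ (⊤:ℕ∞) (f a) := hf a (Finset.mem_cons_self a s)
    have h2 : ContDiff ℝ (⊤:ℕ∞) (fun y => ∑ i ∈ s, f i y) :=
      ContDiff.sum fun i hi => hf i (Finset.mem_cons_of_mem hi)
    simp only [Finset.sum_cons]
    rw [iteratedDeriv_add' h1 h2 x, ih fun i hi => hf i (Finset.mem_cons_of_mem hi)]



lemma iteratedDeriv_affine {k : ℕ} {F : ℝ → ℝ} (hF : ContDiff ℝ (⊤:ℕ∞) F) (θ b s : ℝ) :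
    iteratedDeriv k (fun u => F (u * θ + b)) s = θ ^ k * iteratedDeriv k F (s * θ + b) := by
  have hFb : ContDiff ℝ (k : ℕ∞) (fun z => F (z + b)) :=
    (hF.of_le (by exact_mod_cast le_top)).comp (contDiff_id.add contDiff_const)
  have h1 : (fun u => F (u * θ + b)) = fun u => (fun z => F (z + b)) (θ * u) := by
    funext u; rw [mul_comm]
  rw [h1, iteratedDeriv_comp_const_mul hFb θ, iteratedDeriv_comp_add_const]
  simp [mul_comm θ s]



noncomputable def polyAnti (p : Polynomial ℝ) : Polynomial ℝ :=
  p.sum fun n a => Polynomial.C (a / (n + 1)) * Polynomial.X ^ (n + 1)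

lemma derivative_polyAnti (p : Polynomial ℝ) : (polyAnti p).derivative = p := by
  conv_rhs => rw [← p.sum_C_mul_X_pow_eq]
  rw [polyAnti, Polynomial.sum, map_sum, Polynomial.sum]
  refine Finset.sum_congr rfl fun n hn => ?_
  have hne : ((n : ℝ) + 1) ≠ 0 := by positivity
  rw [derivative_C_mul_X_pow, Nat.add_sub_cancel]
  congr 2
  push_cast
  field_simp

lemma exists_poly_of_iteratedDeriv_eq_zero :
    ∀ (k : ℕ) (f : ℝ → ℝ), ContDiff ℝ (⊤ : ℕ∞) f → (∀ x, iteratedDeriv k f x = 0) →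
      ∃ p : Polynomial ℝ, ∀ x, f x = p.eval x := by
  intro k
  induction k with
  | zero =>
    intro f _ h
    exact ⟨0, by simpa [iteratedDeriv_zero] using h⟩
  | succ k ih =>
    intro f hf h
    have hd : ContDiff ℝ (⊤ : ℕ∞) (deriv f) := (contDiff_infty_iff_deriv.1 hf).2
    obtain ⟨p, hp⟩ := ih (deriv f) hd (fun x => by
      rw [← iteratedDeriv_succ']; exact h x)
    set q := polyAnti p with hq
    have hfd : Differentiable ℝ f := hf.differentiable (by simp)
    have hderiv : ∀ x, deriv (fun y => f y - q.eval y) x = 0 := by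
      intro x
      have h1 : DifferentiableAt ℝ f x := hfd.differentiableAt
      have h2 : DifferentiableAt ℝ (fun y => q.eval y) x := q.differentiableAt
      rw [deriv_fun_sub h1 h2, Polynomial.deriv, derivative_polyAnti, hp, sub_self]
    have hconst : ∀ x, f x - q.eval x = f 0 - q.eval 0 := by
      intro x
      exact is_const_of_deriv_eq_zero (hfd.sub q.differentiable) hderiv x 0
    refine ⟨q + Polynomial.C (f 0 - q.eval 0), fun x => ?_⟩
    have := hconst x
    simp only [Polynomial.eval_add, Polynomial.eval_C]
    linarith

lemma degree_lt_of_iterate_derivative_eq_zero :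
    ∀ (k : ℕ) (p : Polynomial ℝ), Polynomial.derivative^[k] p = 0 → p.degree < (k : ℕ) := by
  intro k
  induction k with
  | zero => intro p hp; simp only [Function.iterate_zero, id_eq] at hp; simp [hp]
  | succ k ih =>
    intro p hp
    rw [Function.iterate_succ_apply] at hp
    have hd : (Polynomial.derivative p).degree < k := ih _ hp
    rcases eq_or_ne p 0 with rfl | hp0
    · exact lt_of_eq_of_lt Polynomial.degree_zero (by exact_mod_cast WithBot.bot_lt_coe (k+1))
    rw [← Polynomial.natDegree_lt_iff_degree_lt hp0]
    rcases Nat.eq_zero_or_pos p.natDegree with h0 | h0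
    · omega
    · have hdne : Polynomial.derivative p ≠ 0 := by
        intro hzero
        have := Polynomial.natDegree_eq_zero_of_derivative_eq_zero hzero
        omega
      have h1 : (Polynomial.derivative p).natDegree < k := by
        rwa [← Polynomial.natDegree_lt_iff_degree_lt hdne] at hd
      have h2 : (Polynomial.derivative p).natDegree < p.natDegree :=
        Polynomial.natDegree_derivative_lt (by omega)
      have h3 : (Polynomial.derivative p).natDegree = p.natDegree - 1 := by
        have := Polynomial.degree_derivative_eq p h0
        have h4 : (Polynomial.derivative p).natDegree = p.natDegree - 1 :=
          Polynomial.natDegree_eq_of_degree_eq_some this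
        exact h4
      omega



lemma exists_power_sum_ne_zero {ι : Type*} [DecidableEq ι] (S : Finset ι) (θ : ι → ℝ)
    (hθ : Set.InjOn θ S) (c : ι → ℝ) {i₀ : ι} (hi₀ : i₀ ∈ S) (hc : c i₀ ≠ 0) :
    ∃ K, K < S.card ∧ ∑ i ∈ S, c i * θ i ^ K ≠ 0 := by
  by_contra h
  push_neg at h
  set T := S.image θ with hT
  have hTcard : T.card = S.card := Finset.card_image_of_injOn hθ
  have hinj : Set.InjOn id (T : Set ℝ) := Function.injective_id.injOn
  have hmem : θ i₀ ∈ T := Finset.mem_image_of_mem θ hi₀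
  set q := Lagrange.basis T id (θ i₀) with hq
  have hqdeg : q.natDegree < S.card := by
    have h1 : q.natDegree = T.card - 1 := Lagrange.natDegree_basis hinj hmem
    have h2 : 0 < T.card := Finset.card_pos.2 ⟨θ i₀, hmem⟩
    omega
  have key : ∑ i ∈ S, c i * q.eval (θ i) = 0 := by
    have heval : ∀ i ∈ S, q.eval (θ i) =
        ∑ k ∈ Finset.range S.card, q.coeff k * θ i ^ k := fun i _ =>
      Polynomial.eval_eq_sum_range' hqdeg (θ i)
    rw [Finset.sum_congr rfl fun i hi => by rw [heval i hi]]
    simp_rw [Finset.mul_sum]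
    rw [Finset.sum_comm]
    refine Finset.sum_eq_zero fun k hk => ?_
    have := h k (Finset.mem_range.1 hk)
    calc ∑ i ∈ S, c i * (q.coeff k * θ i ^ k)
        = q.coeff k * ∑ i ∈ S, c i * θ i ^ k := by
          rw [Finset.mul_sum]; exact Finset.sum_congr rfl fun i _ => by ring
      _ = 0 := by rw [this, mul_zero]
  have key2 : ∑ i ∈ S, c i * q.eval (θ i) = c i₀ := by
    rw [Finset.sum_eq_single i₀]
    · have h1 : (Lagrange.basis T id (θ i₀)).eval (id (θ i₀)) = 1 :=
        Lagrange.eval_basis_self hinj hmem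
      simp only [id_eq] at h1
      rw [hq, h1, mul_one]
    · intro i hi hne
      have hθne : θ i₀ ≠ θ i := fun hgg => hne (hθ hi hi₀ hgg.symm)
      rw [hq]
      have : (Lagrange.basis T id (θ i₀)).eval (id (θ i)) = 0 :=
        Lagrange.eval_basis_of_ne hθne (Finset.mem_image_of_mem θ hi)
      simp only [id_eq] at this
      rw [this, mul_zero]
    · intro h; exact absurd hi₀ h
  rw [key] at key2
  exact hc key2.symm



lemma iteratedDeriv_polyeval (p : Polynomial ℝ) (k : ℕ) :
    iteratedDeriv k (fun x => p.eval x) = fun x => (Polynomial.derivative^[k] p).eval x := by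
  induction k with
  | zero => simp [iteratedDeriv_zero]
  | succ k ih =>
    rw [iteratedDeriv_succ, ih, Function.iterate_succ_apply']
    funext x
    exact Polynomial.deriv (p := Polynomial.derivative^[k] p)

section BumpPoly

variable {σ : ℝ → ℝ} {ι : Type*} (S : Finset ι) (θ c : ι → ℝ)

/-- convolution with a bump is a polynomial of degree < K -/
lemma bump_conv_poly (hσc : Continuous σ) (K : ℕ) (hKne : ∑ i ∈ S, c i * θ i ^ K ≠ 0)
    (hrel : ∀ s b : ℝ, ∑ i ∈ S, c i * σ (s * θ i + b) = 0) (φ : ContDiffBump (0:ℝ)) :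
    ∃ p : Polynomial ℝ, p.degree < (K : ℕ) ∧
      ∀ x, (φ.normed volume ⋆[lsmul ℝ ℝ, volume] σ) x = p.eval x := by
  set F : ℝ → ℝ := φ.normed volume ⋆[lsmul ℝ ℝ, volume] σ with hF
  have hFsm : ContDiff ℝ (⊤:ℕ∞) F :=
    HasCompactSupport.contDiff_convolution_left _ φ.hasCompactSupport_normed
      φ.contDiff_normed (hσc.locallyIntegrable)
  -- relation for F
  have hFrel : ∀ s b : ℝ, ∑ i ∈ S, c i * F (s * θ i + b) = 0 := by
    intro s b
    have hint : ∀ i : ι, Integrable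
        (fun y => c i * (φ.normed volume y * σ (s * θ i + b - y))) volume := by
      intro i
      refine (Continuous.integrable_of_hasCompactSupport ?_ ?_).const_mul _
      · exact φ.continuous_normed.mul (hσc.comp (continuous_const.sub continuous_id))
      · exact φ.hasCompactSupport_normed.mul_right
    have h1 : ∀ i : ι, F (s * θ i + b)
        = ∫ y, φ.normed volume y * σ (s * θ i + b - y) := by
      intro i
      rw [hF, convolution_lsmul]
      simp_rw [smul_eq_mul]
    calc ∑ i ∈ S, c i * F (s * θ i + b)
        = ∑ i ∈ S, ∫ y, c i * (φ.normed volume y * σ (s * θ i + b - y)) := by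
          refine Finset.sum_congr rfl fun i _ => ?_
          rw [h1 i, MeasureTheory.integral_const_mul]
      _ = ∫ y, ∑ i ∈ S, c i * (φ.normed volume y * σ (s * θ i + b - y)) :=
          (MeasureTheory.integral_finset_sum S fun i _ => hint i).symm
      _ = ∫ y, φ.normed volume y * ∑ i ∈ S, c i * σ (s * θ i + (b - y)) := by
          refine integral_congr_ae (Filter.Eventually.of_forall fun y => ?_)
          dsimp only
          rw [Finset.mul_sum]
          refine Finset.sum_congr rfl fun i _ => ?_
          rw [show s * θ i + b - y = s * θ i + (b - y) by ring]
          ring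
      _ = 0 := by simp [hrel]
  -- K-th derivative of F vanishes
  have hder : ∀ b : ℝ, iteratedDeriv K F b = 0 := by
    intro b
    have hcomp : ∀ i : ι, ContDiff ℝ (⊤:ℕ∞) (fun u : ℝ => c i * F (u * θ i + b)) := by
      intro i
      exact contDiff_const.mul
        (hFsm.comp ((contDiff_id.mul contDiff_const).add contDiff_const))
    have hzero : (fun u : ℝ => ∑ i ∈ S, c i * F (u * θ i + b)) = fun _ => 0 :=
      funext fun u => hFrel u b
    have h2 : iteratedDeriv K (fun u : ℝ => ∑ i ∈ S, c i * F (u * θ i + b)) 0 = 0 := by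
      rw [hzero, iteratedDeriv_zero_fun]
    rw [iteratedDeriv_finset_sum S (fun i _ => hcomp i) K 0] at h2
    have h3 : ∀ i ∈ S, iteratedDeriv K (fun u : ℝ => c i * F (u * θ i + b)) 0
        = c i * (θ i ^ K * iteratedDeriv K F b) := by
      intro i _
      have hFa : ContDiff ℝ (⊤:ℕ∞) (fun u : ℝ => F (u * θ i + b)) :=
        hFsm.comp ((contDiff_id.mul contDiff_const).add contDiff_const)
      rw [iteratedDeriv_cmul hFa (c i) 0, iteratedDeriv_affine hFsm (θ i) b 0]
      simp
    rw [Finset.sum_congr rfl h3] at h2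
    have h4 : (∑ i ∈ S, c i * θ i ^ K) * iteratedDeriv K F b = 0 := by
      rw [Finset.sum_mul]
      rw [← h2]
      exact Finset.sum_congr rfl fun i _ => by ring
    exact (mul_eq_zero.1 h4).resolve_left hKne
  obtain ⟨p, hp⟩ := exists_poly_of_iteratedDeriv_eq_zero K F hFsm hder
  refine ⟨p, ?_, hp⟩
  have hFp : iteratedDeriv K F = fun x => (Polynomial.derivative^[K] p).eval x := by
    rw [show F = fun x => p.eval x from funext hp, iteratedDeriv_polyeval]
  have : ∀ x : ℝ, (Polynomial.derivative^[K] p).eval x = 0 := by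
    intro x; rw [← congrFun hFp x]; exact hder x
  have hz : Polynomial.derivative^[K] p = 0 :=
    Polynomial.funext fun r => by rw [this r, Polynomial.eval_zero]
  exact degree_lt_of_iterate_derivative_eq_zero K p hz

end BumpPoly



lemma sigma_is_poly {σ : ℝ → ℝ} (hσc : Continuous σ) {ι : Type*} [DecidableEq ι]
    (S : Finset ι) (θ : ι → ℝ) (hθ : Set.InjOn θ S) (c : ι → ℝ) {i₀ : ι} (hi₀ : i₀ ∈ S)
    (hc : c i₀ ≠ 0) (hrel : ∀ s b : ℝ, ∑ i ∈ S, c i * σ (s * θ i + b) = 0) :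
    ∃ p : Polynomial ℝ, ∀ t, σ t = p.eval t := by
  obtain ⟨K, _, hKne⟩ := exists_power_sum_ne_zero S θ hθ c hi₀ hc
  have hlt : ∀ n : ℕ, ((n : ℝ) + 2)⁻¹ < ((n : ℝ) + 1)⁻¹ := by
    intro n
    rw [inv_lt_inv₀ (by positivity) (by positivity)]
    linarith
  set φ : ℕ → ContDiffBump (0:ℝ) :=
    fun n => ⟨((n : ℝ) + 2)⁻¹, ((n : ℝ) + 1)⁻¹, by positivity, hlt n⟩ with hφ
  have hφr : Tendsto (fun n => (φ n).rOut) atTop (𝓝 0) := by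
    have : (fun n : ℕ => ((n : ℝ) + 1)⁻¹) = fun n : ℕ => 1 / ((n : ℝ) + 1) := by
      funext n; rw [one_div]
    simpa [hφ, this] using tendsto_one_div_add_atTop_nhds_zero_nat
  have hbump := fun n : ℕ => bump_conv_poly S θ c hσc K hKne hrel (φ n)
  choose p hdeg heq using hbump
  set N : Finset ℝ := (Finset.range K).image (fun m : ℕ => (m : ℝ)) with hN
  have hNcard : N.card = K := by
    rw [hN, Finset.card_image_of_injective _ Nat.cast_injective, Finset.card_range]
  have hNinj : Set.InjOn id (N : Set ℝ) := Function.injective_id.injOn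
  set B : ℝ → ℝ → ℝ := fun t x => (Lagrange.basis N id t).eval x with hB
  have hFn : ∀ n x, (p n).eval x = ∑ t ∈ N, (p n).eval t * B t x := by
    intro n x
    have h1 : Lagrange.interpolate N id (fun t => (p n).eval (id t)) = p n :=
      Lagrange.eq_interpolate (f := p n) hNinj (by rw [hNcard]; exact hdeg n) |>.symm
    conv_lhs => rw [← h1]
    rw [Lagrange.interpolate_apply, Polynomial.eval_finset_sum]
    exact Finset.sum_congr rfl fun t _ => by rw [Polynomial.eval_mul, Polynomial.eval_C]; rfl
  have hconv : ∀ x : ℝ, Tendsto (fun n => (p n).eval x) atTop (𝓝 (σ x)) := by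
    intro x
    have h2 := ContDiffBump.convolution_tendsto_right_of_continuous
      (μ := volume) (φ := φ) (l := atTop) hφr hσc x
    refine h2.congr fun n => ?_
    exact (heq n x)
  refine ⟨Lagrange.interpolate N id σ, fun x => ?_⟩
  have hlim2 : Tendsto (fun n => (p n).eval x) atTop (𝓝 (∑ t ∈ N, σ t * B t x)) := by
    have : ∀ n, (p n).eval x = ∑ t ∈ N, (p n).eval t * B t x := fun n => hFn n x
    rw [funext this]
    exact tendsto_finset_sum _ fun t _ => (hconv t).mul_const _
  have := tendsto_nhds_unique (hconv x) hlim2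
  rw [this, Lagrange.interpolate_apply, Polynomial.eval_finset_sum]
  exact Finset.sum_congr rfl fun t _ => by rw [Polynomial.eval_mul, Polynomial.eval_C]



private noncomputable def lfun {d : ℕ} (v : Fin d → ℝ) : (Fin d → ℝ) →ₗ[ℝ] ℝ where
  toFun a := ∑ j, a j * v j
  map_add' a b := by simp [add_mul, Finset.sum_add_distrib]
  map_smul' r a := by simp [Finset.mul_sum, mul_assoc]

lemma exists_generic_direction {d : ℕ} {ι : Type*} [DecidableEq ι] (S : Finset ι)
    (ζ : ι → (Fin d → ℝ)) (hζ : Set.InjOn ζ S) :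
    ∃ a₀ : Fin d → ℝ, ∀ i ∈ S, ∀ i' ∈ S, i ≠ i' →
      (∑ j, a₀ j * ζ i j) ≠ (∑ j, a₀ j * ζ i' j) := by
  classical
  set bad : Set (Fin d → ℝ) :=
    ⋃ p ∈ (S.offDiag : Set (ι × ι)), {a | lfun (ζ p.1 - ζ p.2) a = 0} with hbad
  have hnull : volume bad = 0 := by
    rw [hbad, measure_biUnion_null_iff (S.offDiag : Set (ι × ι)).toFinite.countable]
    intro p hp
    simp only [Finset.mem_coe, Finset.mem_offDiag] at hp
    have hv : ζ p.1 - ζ p.2 ≠ 0 := by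
      intro h
      exact hp.2.2 (hζ hp.1 hp.2.1 (by rwa [sub_eq_zero] at h))
    have hL : lfun (ζ p.1 - ζ p.2) ≠ 0 := by
      intro h
      apply hv
      funext j
      have := congrFun (congrArg (fun L : (Fin d → ℝ) →ₗ[ℝ] ℝ => L.toFun) h)
        (ζ p.1 - ζ p.2)
      simp only [lfun, LinearMap.coe_mk, AddHom.coe_mk] at this
      have hsum : ∑ j, (ζ p.1 - ζ p.2) j * (ζ p.1 - ζ p.2) j = 0 := by
        simpa using this
      have hz := (Finset.sum_eq_zero_iff_of_nonneg
        (fun j _ => mul_self_nonneg ((ζ p.1 - ζ p.2) j))).1 hsum j (Finset.mem_univ j)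
      have := mul_self_eq_zero.1 hz
      simpa using this
    have hker : LinearMap.ker (lfun (ζ p.1 - ζ p.2)) ≠ ⊤ :=
      fun h => hL (LinearMap.ker_eq_top.1 h)
    have : {a : Fin d → ℝ | lfun (ζ p.1 - ζ p.2) a = 0}
        = (LinearMap.ker (lfun (ζ p.1 - ζ p.2)) : Set (Fin d → ℝ)) := by
      ext a; simp [LinearMap.mem_ker]
    rw [this]
    exact Measure.addHaar_submodule volume _ hker
  have huniv : (0 : ENNReal) < volume (Set.univ : Set (Fin d → ℝ)) :=
    isOpen_univ.measure_pos volume ⟨0, trivial⟩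
  have hne : bad ≠ Set.univ := by
    intro h
    rw [h] at hnull
    exact huniv.ne' hnull
  obtain ⟨a₀, ha₀⟩ : ∃ a₀, a₀ ∉ bad := by
    by_contra h
    push_neg at h
    exact hne (Set.eq_univ_of_forall h)
  refine ⟨a₀, fun i hi i' hi' hne' heq => ha₀ ?_⟩
  rw [hbad]
  refine Set.mem_biUnion (show (i, i') ∈ (S.offDiag : Set (ι × ι)) by
    simp [Finset.mem_offDiag, hi, hi', hne']) ?_
  simp only [Set.mem_setOf_eq, lfun, LinearMap.coe_mk, AddHom.coe_mk, Pi.sub_apply]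
  have : ∑ j, a₀ j * (ζ i j - ζ i' j) = (∑ j, a₀ j * ζ i j) - ∑ j, a₀ j * ζ i' j := by
    rw [← Finset.sum_sub_distrib]
    exact Finset.sum_congr rfl fun j _ => by ring
  rw [this]
  exact sub_eq_zero.2 heq

lemma coeff_eq_zero_of_relation {σ : ℝ → ℝ} (hσc : Continuous σ)
    (hσp : ¬ ∃ p : Polynomial ℝ, ∀ t, σ t = p.eval t)
    {d : ℕ} {ι : Type*} [DecidableEq ι] (S : Finset ι) (ζ : ι → (Fin d → ℝ))
    (hζ : Set.InjOn ζ S) (c : ι → ℝ)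
    (hrel : ∀ (a : Fin d → ℝ) (b : ℝ), ∑ i ∈ S, c i * σ ((∑ j, a j * ζ i j) + b) = 0) :
    ∀ i ∈ S, c i = 0 := by
  obtain ⟨a₀, ha₀⟩ := exists_generic_direction S ζ hζ
  intro i₀ hi₀
  by_contra hc
  refine hσp (sigma_is_poly hσc S (fun i => ∑ j, a₀ j * ζ i j) ?_ c hi₀ hc ?_)
  · intro i hi i' hi' h
    by_contra hne
    exact ha₀ i hi i' hi' hne h
  · intro s b
    have h1 := hrel (fun j => s * a₀ j) b
    have h2 : ∀ i, (∑ j, (s * a₀ j) * ζ i j) = s * ∑ j, a₀ j * ζ i j := by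
      intro i
      rw [Finset.mul_sum]
      exact Finset.sum_congr rfl fun j _ => by ring
    simpa [h2] using h1



/-- For a continuous non-polynomial activation `σ`, distinct multisets of pairs of points can be
separated by a sum of products of shallow neurons. -/
theorem exists_neuron_product_separating (d₁ d₂ n : ℕ)
    (σ : ℝ → ℝ) (hσc : Continuous σ)
    (hσp : ¬ ∃ p : Polynomial ℝ, ∀ t : ℝ, σ t = p.eval t)
    (x xb : Fin n → (Fin d₁ → ℝ) × (Fin d₂ → ℝ))
    (hne : (Finset.univ.val.map x) ≠ (Finset.univ.val.map xb)) :
    ∃ (a₁ : Fin d₁ → ℝ) (a₂ : Fin d₂ → ℝ) (b₁ b₂ : ℝ),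
      ∑ k, σ ((∑ j, a₁ j * (x k).1 j) + b₁) * σ ((∑ j, a₂ j * (x k).2 j) + b₂) ≠
      ∑ k, σ ((∑ j, a₁ j * (xb k).1 j) + b₁) * σ ((∑ j, a₂ j * (xb k).2 j) + b₂) := by
  classical
  by_contra hcon
  push_neg at hcon
  set M₁ : Multiset ((Fin d₁ → ℝ) × (Fin d₂ → ℝ)) := Finset.univ.val.map x with hM₁
  set M₂ : Multiset ((Fin d₁ → ℝ) × (Fin d₂ → ℝ)) := Finset.univ.val.map xb with hM₂
  set E : Finset ((Fin d₁ → ℝ) × (Fin d₂ → ℝ)) := M₁.toFinset ∪ M₂.toFinset with hE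
  set c : ((Fin d₁ → ℝ) × (Fin d₂ → ℝ)) → ℝ :=
    fun p => (M₁.count p : ℝ) - (M₂.count p : ℝ) with hc
  -- rewriting the sums over multisets as sums over E
  have hsum : ∀ (y : Fin n → (Fin d₁ → ℝ) × (Fin d₂ → ℝ))
      (G : ((Fin d₁ → ℝ) × (Fin d₂ → ℝ)) → ℝ),
      (Finset.univ.val.map y).toFinset ⊆ E →
      ∑ k, G (y k) = ∑ p ∈ E, ((Finset.univ.val.map y).count p : ℝ) * G p := by
    intro y G hsub
    have e1 : ∑ k, G (y k) = ((Finset.univ.val.map y).map G).sum := by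
      rw [Multiset.map_map]
      rfl
    rw [e1, Finset.sum_multiset_map_count]
    rw [Finset.sum_subset hsub]
    · exact Finset.sum_congr rfl fun p _ => by rw [nsmul_eq_mul]
    · intro p _ hp
      have : (Finset.univ.val.map y).count p = 0 :=
        Multiset.count_eq_zero_of_notMem (by simpa [Multiset.mem_toFinset] using hp)
      rw [this, zero_smul]
  have key : ∀ (a₁ : Fin d₁ → ℝ) (b₁ : ℝ) (a₂ : Fin d₂ → ℝ) (b₂ : ℝ),
      ∑ p ∈ E, c p * (σ ((∑ j, a₁ j * p.1 j) + b₁) * σ ((∑ j, a₂ j * p.2 j) + b₂)) = 0 := by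
    intro a₁ b₁ a₂ b₂
    set G : ((Fin d₁ → ℝ) × (Fin d₂ → ℝ)) → ℝ :=
      fun p => σ ((∑ j, a₁ j * p.1 j) + b₁) * σ ((∑ j, a₂ j * p.2 j) + b₂) with hG
    have h1 := hsum x G Finset.subset_union_left
    have h2 := hsum xb G Finset.subset_union_right
    have h3 := hcon a₁ a₂ b₁ b₂
    have h4 : ∑ p ∈ E, (M₁.count p : ℝ) * G p = ∑ p ∈ E, (M₂.count p : ℝ) * G p := by
      rw [← h1, ← h2]; exact h3
    calc ∑ p ∈ E, c p * G p
        = ∑ p ∈ E, ((M₁.count p : ℝ) * G p - (M₂.count p : ℝ) * G p) :=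
          Finset.sum_congr rfl fun p _ => by rw [hc]; ring
      _ = ∑ p ∈ E, (M₁.count p : ℝ) * G p - ∑ p ∈ E, (M₂.count p : ℝ) * G p :=
          Finset.sum_sub_distrib _ _
      _ = 0 := by rw [h4, sub_self]
  -- first peeling
  set E₁ : Finset (Fin d₁ → ℝ) := E.image Prod.fst with hE₁
  have hD : ∀ (a₂ : Fin d₂ → ℝ) (b₂ : ℝ), ∀ z ∈ E₁,
      ∑ p ∈ E.filter (fun p => p.1 = z), c p * σ ((∑ j, a₂ j * p.2 j) + b₂) = 0 := by
    intro a₂ b₂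
    set cD : (Fin d₁ → ℝ) → ℝ :=
      fun z => ∑ p ∈ E.filter (fun p => p.1 = z), c p * σ ((∑ j, a₂ j * p.2 j) + b₂) with hcD
    have hrel1 : ∀ (a₁ : Fin d₁ → ℝ) (b₁ : ℝ),
        ∑ z ∈ E₁, cD z * σ ((∑ j, a₁ j * z j) + b₁) = 0 := by
      intro a₁ b₁
      have hfib := Finset.sum_fiberwise_of_maps_to
        (fun p (hp : p ∈ E) => Finset.mem_image_of_mem Prod.fst hp)
        (fun p => c p * (σ ((∑ j, a₁ j * p.1 j) + b₁) * σ ((∑ j, a₂ j * p.2 j) + b₂)))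
      rw [← key a₁ b₁ a₂ b₂, ← hfib]
      refine Finset.sum_congr rfl fun z _ => ?_
      rw [hcD, Finset.sum_mul]
      refine Finset.sum_congr rfl fun p hp => ?_
      have hpz : p.1 = z := (Finset.mem_filter.1 hp).2
      rw [hpz]
      ring
    exact @coeff_eq_zero_of_relation σ hσc hσp d₁ (Fin d₁ → ℝ) _ E₁ id
      Function.injective_id.injOn cD hrel1
  -- second peeling
  have hzero : ∀ p ∈ E, c p = 0 := by
    intro p hp
    have hz : p.1 ∈ E₁ := Finset.mem_image_of_mem Prod.fst hp
    have hrel2 : ∀ (a₂ : Fin d₂ → ℝ) (b₂ : ℝ),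
        ∑ q ∈ E.filter (fun q => q.1 = p.1), c q * σ ((∑ j, a₂ j * q.2 j) + b₂) = 0 :=
      fun a₂ b₂ => hD a₂ b₂ p.1 hz
    have hinj : Set.InjOn (Prod.snd : ((Fin d₁ → ℝ) × (Fin d₂ → ℝ)) → (Fin d₂ → ℝ))
        (↑(E.filter (fun q => q.1 = p.1))) := by
      intro q hq q' hq' hqq
      simp only [Finset.coe_filter, Set.mem_setOf_eq] at hq hq'
      exact Prod.ext (hq.2.trans hq'.2.symm) hqq
    exact @coeff_eq_zero_of_relation σ hσc hσp d₂ ((Fin d₁ → ℝ) × (Fin d₂ → ℝ)) _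
      (E.filter (fun q => q.1 = p.1)) Prod.snd hinj c hrel2 p
      (Finset.mem_filter.2 ⟨hp, rfl⟩)
  -- conclude multisets are equal
  apply hne
  ext p
  by_cases hp : p ∈ E
  · have h0 := hzero p hp
    rw [hc] at h0
    simp only at h0
    have h1 : (M₁.count p : ℝ) = (M₂.count p : ℝ) := by linarith
    exact_mod_cast h1
  · rw [hE, Finset.mem_union, Multiset.mem_toFinset, Multiset.mem_toFinset] at hp
    push_neg at hp
    rw [Multiset.count_eq_zero_of_notMem hp.1, Multiset.count_eq_zero_of_notMem hp.2]
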